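/- (Reduction criterion) If ρ is a separable density matrix on ℂ^m ⊗ ℂ^n, then I ⊗ ρ_B − ρ ≥ 0 and ρ_A ⊗ I − ρ ≥ 0, where ρ_A and ρ_B are the reduced density matrices of ρ. -/

import Mathlib

open Matrix Kronecker BigOperators
open scoped ComplexOrder

lemma kron_conjTranspose {m n p q : Type*} (A : Matrix m n ℂ) (B : Matrix p q ℂ) :
    (A ⊗ₖ B)ᴴ = Aᴴ ⊗ₖ Bᴴ := by
  ext ⟨i, j⟩ ⟨k, l⟩
  simp [kroneckerMap, conjTranspose_apply, mul_comm]

lemma psd_kron {m n : Type*} [Fintype m] [DecidableEq m] [Fintype n] [DecidableEq n]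
    {A : Matrix m m ℂ} {B : Matrix n n ℂ}
    (hA : A.PosSemidef) (hB : B.PosSemidef) : (A ⊗ₖ B).PosSemidef := by
  exact hA.kronecker hB

lemma one_sub_psd {n : Type*} [Fintype n] [DecidableEq n]
    {A : Matrix n n ℂ} (hA : A.PosSemidef)
    (htr : A.trace = 1) : ((1 : Matrix n n ℂ) - A).PosSemidef := by
  have hH := hA.1
  have htr' : ∑ i, hH.eigenvalues i = 1 := by
    have h2 : A.trace = ∑ i, (hH.eigenvalues i : ℂ) := by
      conv_lhs => rw [hH.spectral_theorem]
      rw [Unitary.conjStarAlgAut_apply, Matrix.trace_mul_cycle,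
        (Matrix.mem_unitaryGroup_iff').mp (hH.eigenvectorUnitary).2, Matrix.one_mul]
      simp [Matrix.trace_diagonal]
    rw [htr] at h2
    have := congrArg Complex.re h2
    simpa using this.symm
  have hle : ∀ i, hH.eigenvalues i ≤ 1 := by
    intro i
    rw [← htr']
    exact Finset.single_le_sum (fun j _ => hA.eigenvalues_nonneg j) (Finset.mem_univ i)
  have key : (1 : Matrix n n ℂ) - A =
      (hH.eigenvectorUnitary : Matrix n n ℂ) *
        Matrix.diagonal (fun i => (1 - hH.eigenvalues i : ℂ)) *
        (star (hH.eigenvectorUnitary : Matrix n n ℂ)) := by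
    have hdiag : Matrix.diagonal (fun i => (1 - hH.eigenvalues i : ℂ)) =
        1 - Matrix.diagonal (RCLike.ofReal ∘ hH.eigenvalues) := by
      rw [← Matrix.diagonal_one, ← Matrix.diagonal_sub]
      rfl
    rw [hdiag, Matrix.mul_sub, Matrix.sub_mul, Matrix.mul_one,
      (Matrix.mem_unitaryGroup_iff).mp (hH.eigenvectorUnitary).2,
      ← Unitary.conjStarAlgAut_apply (S := ℂ), ← hH.spectral_theorem]
  rw [key]
  refine Matrix.PosSemidef.mul_mul_conjTranspose_same ?_ _
  refine Matrix.posSemidef_diagonal_iff.mpr fun i => ?_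
  rw [Complex.le_def]
  constructor
  · simpa using sub_nonneg.mpr (hle i)
  · simp

lemma psd_smul {n : Type*} [Fintype n] {A : Matrix n n ℂ} (hA : A.PosSemidef)
    {c : ℝ} (hc : 0 ≤ c) : ((c : ℂ) • A).PosSemidef := by
  constructor
  · unfold Matrix.IsHermitian
    rw [Matrix.conjTranspose_smul, hA.1.eq]
    congr 1
    simp
  · intro x
    exact (hA.smul (a := (c : ℂ)) (by exact_mod_cast hc)).2 x

lemma psd_sum {n : Type*} [Fintype n] {k : ℕ} (f : Fin k → Matrix n n ℂ)
    (hf : ∀ i, (f i).PosSemidef) : (∑ i, f i).PosSemidef := by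
  classical
  refine Finset.sum_induction f _ (fun a b ha hb => ha.add hb) Matrix.PosSemidef.zero
    fun i _ => hf i

/-- Partial trace over the second subsystem: `ρ_A = Tr_B ρ`. -/
noncomputable def trB {m n : ℕ}
    (ρ : Matrix (Fin m × Fin n) (Fin m × Fin n) ℂ) : Matrix (Fin m) (Fin m) ℂ :=
  fun i j => ∑ μ, ρ (i, μ) (j, μ)

/-- Partial trace over the first subsystem: `ρ_B = Tr_A ρ`. -/
noncomputable def trA {m n : ℕ}
    (ρ : Matrix (Fin m × Fin n) (Fin m × Fin n) ℂ) : Matrix (Fin n) (Fin n) ℂ :=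
  fun μ ν => ∑ i, ρ (i, μ) (i, ν)

/-- (Reduction criterion) If `ρ` is a separable density matrix on `ℂ^m ⊗ ℂ^n`,
then `I ⊗ ρ_B − ρ ≥ 0` and `ρ_A ⊗ I − ρ ≥ 0`. -/
theorem reduction_criterion (m n k : ℕ) (p : Fin k → ℝ) (hp : ∀ i, 0 ≤ p i)
    (hsum : ∑ i, p i = 1)
    (ρs : Fin k → Matrix (Fin m) (Fin m) ℂ)
    (σs : Fin k → Matrix (Fin n) (Fin n) ℂ)
    (hρs : ∀ i, (ρs i).PosSemidef) (hσs : ∀ i, (σs i).PosSemidef)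
    (hρtr : ∀ i, (ρs i).trace = 1) (hσtr : ∀ i, (σs i).trace = 1)
    (ρ : Matrix (Fin m × Fin n) (Fin m × Fin n) ℂ)
    (hsep : ρ = ∑ i, (p i : ℂ) • (ρs i ⊗ₖ σs i)) :
    ((1 : Matrix (Fin m) (Fin m) ℂ) ⊗ₖ trA ρ - ρ).PosSemidef ∧
      (trB ρ ⊗ₖ (1 : Matrix (Fin n) (Fin n) ℂ) - ρ).PosSemidef := by
  have htrA : trA ρ = ∑ i, (p i : ℂ) • σs i := by
    ext μ ν
    simp only [trA, hsep, Matrix.sum_apply, Matrix.smul_apply, kroneckerMap_apply,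
      smul_eq_mul]
    rw [Finset.sum_comm]
    refine Finset.sum_congr rfl fun i _ => ?_
    rw [← Finset.mul_sum, ← Finset.sum_mul]
    have ht : (∑ x, ρs i x x) = 1 := by
      simpa [Matrix.trace, Matrix.diag] using hρtr i
    rw [ht, one_mul]
  have htrB : trB ρ = ∑ i, (p i : ℂ) • ρs i := by
    ext a b
    simp only [trB, hsep, Matrix.sum_apply, Matrix.smul_apply, kroneckerMap_apply,
      smul_eq_mul]
    rw [Finset.sum_comm]
    refine Finset.sum_congr rfl fun i _ => ?_
    rw [← Finset.mul_sum, ← Finset.mul_sum]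
    have ht : (∑ x, σs i x x) = 1 := by
      simpa [Matrix.trace, Matrix.diag] using hσtr i
    rw [ht, mul_one]
  constructor
  · have heq : (1 : Matrix (Fin m) (Fin m) ℂ) ⊗ₖ trA ρ - ρ =
        ∑ i, (p i : ℂ) • (((1 : Matrix (Fin m) (Fin m) ℂ) - ρs i) ⊗ₖ σs i) := by
      rw [htrA, hsep]
      ext ⟨a, μ⟩ ⟨b, ν⟩
      simp only [Matrix.sub_apply, kroneckerMap_apply, Matrix.sum_apply, Matrix.smul_apply,
        smul_eq_mul, Matrix.one_apply, Finset.mul_sum]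
      rw [← Finset.sum_sub_distrib]
      refine Finset.sum_congr rfl fun i _ => ?_
      by_cases h : a = b <;> simp [h] <;> ring
    rw [heq]
    refine psd_sum _ fun i => ?_
    exact psd_smul (psd_kron (one_sub_psd (hρs i) (hρtr i)) (hσs i)) (hp i)
  · have heq : trB ρ ⊗ₖ (1 : Matrix (Fin n) (Fin n) ℂ) - ρ =
        ∑ i, (p i : ℂ) • (ρs i ⊗ₖ ((1 : Matrix (Fin n) (Fin n) ℂ) - σs i)) := by
      rw [htrB, hsep]
      ext ⟨a, μ⟩ ⟨b, ν⟩
      simp only [Matrix.sub_apply, kroneckerMap_apply, Matrix.sum_apply, Matrix.smul_apply,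
        smul_eq_mul, Matrix.one_apply, Finset.sum_mul]
      rw [← Finset.sum_sub_distrib]
      refine Finset.sum_congr rfl fun i _ => ?_
      by_cases h : μ = ν <;> simp [h] <;> ring
    rw [heq]
    refine psd_sum _ fun i => ?_
    exact psd_smul (psd_kron (hρs i) (one_sub_psd (hσs i) (hσtr i))) (hp i)
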